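/- arXiv:1904.08473 — 5 statements merged into one kernel-verified Lean document; each statement's English description precedes it below -/
import Mathlib

section
/- Let M = (S, A, P, r, γ) be a finite MDP with γ ∈ (0,1), p0 an initial state distribution, and μ a behavior policy. For every policy π (extended arbitrarily to the absorbing state s_abs), the normalized expected return of π in the original MDP is at least its normalized expected return in the augmented MDP: R_M^π ≥ R_{M_μ}^π. -/
open scoped BigOperators
open Finset

noncomputable section

/-- One-step state-distribution update under policy `π` (here `π s a` denotes `π(a|s)`). -/
def nextDist {S A : Type} [Fintype S] [Fintype A]
    (P : S → A → S → ℝ) (π : S → A → ℝ) (d : S → ℝ) : S → ℝ :=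
  fun s' => ∑ s, ∑ a, d s * π s a * P s a s'

/-- The time-`t` state distribution `d_t^π`. -/
def stateDist {S A : Type} [Fintype S] [Fintype A]
    (P : S → A → S → ℝ) (π : S → A → ℝ) (p0 : S → ℝ) : ℕ → S → ℝ
  | 0 => p0
  | t + 1 => nextDist P π (stateDist P π p0 t)

/-- The discounted state distribution `d^π`. -/
def discDist {S A : Type} [Fintype S] [Fintype A]
    (γ : ℝ) (P : S → A → S → ℝ) (π : S → A → ℝ) (p0 : S → ℝ) : S → ℝ :=
  fun s => (1 - γ) * ∑' t : ℕ, γ ^ t * stateDist P π p0 t s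

/-- The normalized expected return `R^π_M`. -/
def expReturn {S A : Type} [Fintype S] [Fintype A]
    (γ : ℝ) (P : S → A → S → ℝ) (r : S → A → ℝ) (π : S → A → ℝ) (p0 : S → ℝ) : ℝ :=
  (1 - γ) * ∑' t : ℕ, γ ^ t * ∑ s, ∑ a, stateDist P π p0 t s * π s a * r s a

/-- Transition kernel of the augmented MDP `M_μ` on `Option S`, where `none` plays the
role of the absorbing state `s_abs` and `dμ` is the discounted state distribution of
the behavior policy `μ`.  States `some s` with `dμ s = 0` are given no incoming mass,
so the reachable state space is exactly `S_μ ∪ {s_abs}`. -/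
def augP {S A : Type} [Fintype S] [Fintype A]
    (P : S → A → S → ℝ) (dμ : S → ℝ) (μ : S → A → ℝ) : Option S → A → Option S → ℝ
  | none, _, none => 1
  | none, _, some _ => 0
  | some s, a, some s' => if 0 < dμ s * μ s a ∧ 0 < dμ s' then P s a s' else 0
  | some s, a, none =>
      if 0 < dμ s * μ s a then ∑ s' ∈ Finset.univ.filter (fun s' => ¬ 0 < dμ s'), P s a s'
      else 1

/-- Reward function of the augmented MDP `M_μ`. -/
def augR {S A : Type} (r : S → A → ℝ) (dμ : S → ℝ) (μ : S → A → ℝ) : Option S → A → ℝ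
  | none, _ => 0
  | some s, a => if 0 < dμ s * μ s a then r s a else 0

/-- Initial state distribution of the augmented MDP `M_μ`. -/
def augp0 {S : Type} (p0 : S → ℝ) : Option S → ℝ
  | none => 0
  | some s => p0 s

lemma sd_nonneg {S A : Type} [Fintype S] [Fintype A]
    (P : S → A → S → ℝ) (hP0 : ∀ s a s', 0 ≤ P s a s')
    (π : S → A → ℝ) (hπ0 : ∀ s a, 0 ≤ π s a)
    (p0 : S → ℝ) (hp00 : ∀ s, 0 ≤ p0 s) :
    ∀ t s, 0 ≤ stateDist P π p0 t s := by
  intro t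
  induction t with
  | zero => exact hp00
  | succ t ih =>
    intro s'
    refine Finset.sum_nonneg fun s _ => Finset.sum_nonneg fun a _ => ?_
    exact mul_nonneg (mul_nonneg (ih s) (hπ0 s a)) (hP0 s a s')

lemma sd_sum {S A : Type} [Fintype S] [Fintype A]
    (P : S → A → S → ℝ) (hP1 : ∀ s a, ∑ s', P s a s' = 1)
    (π : S → A → ℝ) (hπ1 : ∀ s, ∑ a, π s a = 1)
    (p0 : S → ℝ) (hp01 : ∑ s, p0 s = 1) :
    ∀ t, ∑ s, stateDist P π p0 t s = 1 := by
  intro t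
  induction t with
  | zero => exact hp01
  | succ t ih =>
    have : ∑ s', stateDist P π p0 (t+1) s'
        = ∑ s, ∑ a, ∑ s', stateDist P π p0 t s * π s a * P s a s' := by
      show ∑ s', ∑ s, ∑ a, _ = _
      rw [Finset.sum_comm]
      exact Finset.sum_congr rfl fun s _ => Finset.sum_comm
    rw [this]
    simp only [← Finset.mul_sum, hP1, mul_one, hπ1]
    simpa using ih

lemma augP_nonneg {S A : Type} [Fintype S] [Fintype A]
    (P : S → A → S → ℝ) (hP0 : ∀ s a s', 0 ≤ P s a s')
    (dμ : S → ℝ) (μ : S → A → ℝ) :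
    ∀ x a y, 0 ≤ augP P dμ μ x a y := by
  intro x a y
  rcases x with _ | s <;> rcases y with _ | s' <;> simp only [augP]
  · exact zero_le_one
  · exact le_refl 0
  · split
    · exact Finset.sum_nonneg fun _ _ => hP0 _ _ _
    · exact zero_le_one
  · split
    · exact hP0 _ _ _
    · exact le_refl 0

/-- Pointwise domination: the augmented state distribution at `some s` is at most the
original state distribution at `s`. -/
lemma aug_sd_le {S A : Type} [Fintype S] [Fintype A]
    (P : S → A → S → ℝ) (hP0 : ∀ s a s', 0 ≤ P s a s')
    (dμ : S → ℝ) (μ : S → A → ℝ)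
    (p0 : S → ℝ) (hp00 : ∀ s, 0 ≤ p0 s)
    (π : S → A → ℝ) (hπ0 : ∀ s a, 0 ≤ π s a)
    (πa : Option S → A → ℝ) (hπa0 : ∀ s a, 0 ≤ πa s a)
    (hagree : ∀ s a, πa (some s) a = π s a) :
    ∀ t s, stateDist (augP P dμ μ) πa (augp0 p0) t (some s) ≤ stateDist P π p0 t s := by
  have haugp0 : ∀ x, 0 ≤ augp0 p0 x := by
    intro x; rcases x with _ | s
    · exact le_refl 0
    · exact hp00 s
  have hnn := sd_nonneg (augP P dμ μ) (augP_nonneg P hP0 dμ μ) πa hπa0 (augp0 p0) haugp0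
  intro t
  induction t with
  | zero => intro s; exact le_refl _
  | succ t ih =>
    intro s'
    show ∑ x : Option S, ∑ a, _ ≤ ∑ s, ∑ a, _
    rw [Fintype.sum_option]
    have hnone : ∑ a, stateDist (augP P dμ μ) πa (augp0 p0) t none * πa none a *
        augP P dμ μ none a (some s') = 0 := by
      simp [augP]
    rw [hnone, zero_add]
    refine Finset.sum_le_sum fun s _ => Finset.sum_le_sum fun a _ => ?_
    rw [hagree]
    have h1 : augP P dμ μ (some s) a (some s') ≤ P s a s' := by
      simp only [augP]; split
      · exact le_refl _
      · exact hP0 s a s'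
    exact mul_le_mul (mul_le_mul_of_nonneg_right (ih s) (hπ0 s a))
      h1 (augP_nonneg P hP0 dμ μ _ a _)
      (mul_nonneg (sd_nonneg P hP0 π hπ0 p0 hp00 t s) (hπ0 s a))

/-- For every policy `π` (extended arbitrarily to the absorbing state by a
policy `πa` on `Option S`), the normalized expected return of `π` in the original MDP `M`
is at least its normalized expected return in the augmented MDP `M_μ`. -/
theorem augmented_return_le {S A : Type} [Fintype S] [Fintype A]
    (γ : ℝ) (hγ0 : 0 < γ) (hγ1 : γ < 1)
    (P : S → A → S → ℝ) (hP0 : ∀ s a s', 0 ≤ P s a s') (hP1 : ∀ s a, ∑ s', P s a s' = 1)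
    (r : S → A → ℝ) (hr0 : ∀ s a, 0 ≤ r s a) (hr1 : ∀ s a, r s a ≤ 1)
    (p0 : S → ℝ) (hp00 : ∀ s, 0 ≤ p0 s) (hp01 : ∑ s, p0 s = 1)
    (μ : S → A → ℝ) (hμ0 : ∀ s a, 0 ≤ μ s a) (hμ1 : ∀ s, ∑ a, μ s a = 1)
    (π : S → A → ℝ) (hπ0 : ∀ s a, 0 ≤ π s a) (hπ1 : ∀ s, ∑ a, π s a = 1)
    (πa : Option S → A → ℝ) (hπa0 : ∀ s a, 0 ≤ πa s a) (hπa1 : ∀ s, ∑ a, πa s a = 1)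
    (hagree : ∀ s a, πa (some s) a = π s a) :
    expReturn γ (augP P (discDist γ P μ p0) μ) (augR r (discDist γ P μ p0) μ) πa (augp0 p0)
      ≤ expReturn γ P r π p0 := by
  set dμ := discDist γ P μ p0
  set f : ℕ → ℝ := fun t => γ ^ t * ∑ s, ∑ a, stateDist P π p0 t s * π s a * r s a with hf
  set g : ℕ → ℝ := fun t => γ ^ t * ∑ x, ∑ a,
      stateDist (augP P dμ μ) πa (augp0 p0) t x * πa x a * augR r dμ μ x a with hg
  have haugp0 : ∀ x, 0 ≤ augp0 p0 x := by
    intro x; rcases x with _ | s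
    · exact le_refl 0
    · exact hp00 s
  have hnnA := sd_nonneg (augP P dμ μ) (augP_nonneg P hP0 dμ μ) πa hπa0 (augp0 p0) haugp0
  have hnnO := sd_nonneg P hP0 π hπ0 p0 hp00
  have hdom := aug_sd_le P hP0 dμ μ p0 hp00 π hπ0 πa hπa0 hagree
  -- termwise inequality  g ≤ f
  have hgf : ∀ t, g t ≤ f t := by
    intro t
    apply mul_le_mul_of_nonneg_left _ (le_of_lt (pow_pos hγ0 t))
    rw [Fintype.sum_option]
    have hnone : ∑ a, stateDist (augP P dμ μ) πa (augp0 p0) t none * πa none a *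
        augR r dμ μ none a = 0 := by simp [augR]
    rw [hnone, zero_add]
    refine Finset.sum_le_sum fun s _ => Finset.sum_le_sum fun a _ => ?_
    rw [hagree]
    have h1 : augR r dμ μ (some s) a ≤ r s a := by
      simp only [augR]; split
      · exact le_refl _
      · exact hr0 s a
    have h2 : 0 ≤ augR r dμ μ (some s) a := by
      simp only [augR]; split
      · exact hr0 s a
      · exact le_refl 0
    exact mul_le_mul (mul_le_mul_of_nonneg_right (hdom t s) (hπ0 s a)) h1 h2
      (mul_nonneg (hnnO t s) (hπ0 s a))
  -- nonnegativity of g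
  have hg0 : ∀ t, 0 ≤ g t := by
    intro t
    apply mul_nonneg (le_of_lt (pow_pos hγ0 t))
    refine Finset.sum_nonneg fun x _ => Finset.sum_nonneg fun a _ => ?_
    have h2 : 0 ≤ augR r dμ μ x a := by
      rcases x with _ | s <;> simp only [augR]
      · exact le_refl 0
      · split
        · exact hr0 s a
        · exact le_refl 0
    exact mul_nonneg (mul_nonneg (hnnA t x) (hπa0 x a)) h2
  -- f is bounded by γ^t
  have hfb : ∀ t, f t ≤ γ ^ t := by
    intro t
    have : ∑ s, ∑ a, stateDist P π p0 t s * π s a * r s a ≤ 1 := by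
      calc ∑ s, ∑ a, stateDist P π p0 t s * π s a * r s a
          ≤ ∑ s, ∑ a, stateDist P π p0 t s * π s a * 1 := by
            refine Finset.sum_le_sum fun s _ => Finset.sum_le_sum fun a _ => ?_
            exact mul_le_mul_of_nonneg_left (hr1 s a)
              (mul_nonneg (hnnO t s) (hπ0 s a))
        _ = ∑ s, stateDist P π p0 t s := by
            simp only [mul_one, ← Finset.mul_sum, hπ1]
        _ = 1 := sd_sum P hP1 π hπ1 p0 hp01 t
    calc f t ≤ γ ^ t * 1 :=
          mul_le_mul_of_nonneg_left this (le_of_lt (pow_pos hγ0 t))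
      _ = γ ^ t := mul_one _
  have hsumgeo : Summable fun t : ℕ => γ ^ t :=
    summable_geometric_of_lt_one (le_of_lt hγ0) hγ1
  have hsf : Summable f :=
    Summable.of_nonneg_of_le (fun t => le_trans (hg0 t) (hgf t)) hfb hsumgeo
  have hsg : Summable g :=
    Summable.of_nonneg_of_le hg0 (fun t => le_trans (hgf t) (hfb t)) hsumgeo
  have := Summable.tsum_le_tsum hgf hsg hsf
  unfold expReturn
  exact mul_le_mul_of_nonneg_left this (by linarith)
end
end

section
/- Let (S, A, P, r, γ) be a finite MDP with γ ∈ (0,1), p0 an initial state distribution, and let π and μ be policies such that d^μ(s) > 0 for all s ∈ S and μ(a|s) > 0 for all (s,a). If w(s) = d^π(s)/d^μ(s) for all s, then L(w, f) = 0 for every function f : S → ℝ. -/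
open scoped BigOperators
open Finset

noncomputable section

section helper
variable {S A : Type} [Fintype S] [Fintype A]

lemma stateDist_nonneg (P : S → A → S → ℝ) (hP0 : ∀ s a s', 0 ≤ P s a s')
    (π : S → A → ℝ) (hπ0 : ∀ s a, 0 ≤ π s a)
    (p0 : S → ℝ) (hp00 : ∀ s, 0 ≤ p0 s) : ∀ t s, 0 ≤ stateDist P π p0 t s := by
  intro t
  induction t with
  | zero => exact hp00
  | succ t ih =>
    intro s'
    refine Finset.sum_nonneg fun s _ => Finset.sum_nonneg fun a _ => ?_
    exact mul_nonneg (mul_nonneg (ih s) (hπ0 s a)) (hP0 s a s')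

lemma stateDist_sum (P : S → A → S → ℝ) (hP1 : ∀ s a, ∑ s', P s a s' = 1)
    (π : S → A → ℝ) (hπ1 : ∀ s, ∑ a, π s a = 1)
    (p0 : S → ℝ) (hp01 : ∑ s, p0 s = 1) : ∀ t, ∑ s, stateDist P π p0 t s = 1 := by
  intro t
  induction t with
  | zero => exact hp01
  | succ t ih =>
    show ∑ s', ∑ s, ∑ a, stateDist P π p0 t s * π s a * P s a s' = 1
    rw [Finset.sum_comm]
    calc ∑ s, ∑ s', ∑ a, stateDist P π p0 t s * π s a * P s a s'
        = ∑ s, ∑ a, ∑ s', stateDist P π p0 t s * π s a * P s a s' :=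
          Finset.sum_congr rfl fun s _ => Finset.sum_comm
      _ = 1 := by simp_rw [← Finset.mul_sum, hP1, mul_one, ← Finset.mul_sum, hπ1, mul_one, ih]

lemma stateDist_summable {γ : ℝ} (hγ0 : 0 < γ) (hγ1 : γ < 1)
    (P : S → A → S → ℝ) (hP0 : ∀ s a s', 0 ≤ P s a s') (hP1 : ∀ s a, ∑ s', P s a s' = 1)
    (π : S → A → ℝ) (hπ0 : ∀ s a, 0 ≤ π s a) (hπ1 : ∀ s, ∑ a, π s a = 1)
    (p0 : S → ℝ) (hp00 : ∀ s, 0 ≤ p0 s) (hp01 : ∑ s, p0 s = 1) (s : S) :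
    Summable (fun t => γ ^ t * stateDist P π p0 t s) := by
  refine Summable.of_nonneg_of_le
    (fun t => mul_nonneg (pow_nonneg hγ0.le t) (stateDist_nonneg P hP0 π hπ0 p0 hp00 t s))
    (fun t => ?_) (summable_geometric_of_lt_one hγ0.le hγ1)
  have hle : stateDist P π p0 t s ≤ 1 := by
    calc stateDist P π p0 t s ≤ ∑ s', stateDist P π p0 t s' :=
          Finset.single_le_sum (fun i _ => stateDist_nonneg P hP0 π hπ0 p0 hp00 t i)
            (Finset.mem_univ s)
      _ = 1 := stateDist_sum P hP1 π hπ1 p0 hp01 t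
  calc γ ^ t * stateDist P π p0 t s ≤ γ ^ t * 1 :=
        mul_le_mul_of_nonneg_left hle (pow_nonneg hγ0.le t)
    _ = γ ^ t := mul_one _

lemma bellman {γ : ℝ} (hγ0 : 0 < γ) (hγ1 : γ < 1)
    (P : S → A → S → ℝ) (hP0 : ∀ s a s', 0 ≤ P s a s') (hP1 : ∀ s a, ∑ s', P s a s' = 1)
    (π : S → A → ℝ) (hπ0 : ∀ s a, 0 ≤ π s a) (hπ1 : ∀ s, ∑ a, π s a = 1)
    (p0 : S → ℝ) (hp00 : ∀ s, 0 ≤ p0 s) (hp01 : ∑ s, p0 s = 1) (s' : S) :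
    discDist γ P π p0 s' =
      (1 - γ) * p0 s' + γ * nextDist P π (discDist γ P π p0) s' := by
  have hsum : ∀ s : S, Summable (fun t => γ ^ t * stateDist P π p0 t s) :=
    stateDist_summable hγ0 hγ1 P hP0 hP1 π hπ0 hπ1 p0 hp00 hp01
  have key : nextDist P π (discDist γ P π p0) s' =
      (1 - γ) * ∑' t : ℕ, γ ^ t * stateDist P π p0 (t + 1) s' := by
    unfold nextDist discDist
    calc ∑ s, ∑ a, ((1 - γ) * ∑' t : ℕ, γ ^ t * stateDist P π p0 t s) * π s a * P s a s'
        = ∑ s, ∑ a, (1 - γ) * ∑' t : ℕ,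
            γ ^ t * stateDist P π p0 t s * (π s a * P s a s') := by
          refine Finset.sum_congr rfl fun s _ => Finset.sum_congr rfl fun a _ => ?_
          rw [tsum_mul_right]
          ring
      _ = (1 - γ) * ∑ s, ∑ a, ∑' t : ℕ,
            γ ^ t * stateDist P π p0 t s * (π s a * P s a s') := by
          simp_rw [Finset.mul_sum]
      _ = (1 - γ) * ∑' t : ℕ, ∑ s, ∑ a,
            γ ^ t * stateDist P π p0 t s * (π s a * P s a s') := by
          congr 1
          rw [Summable.tsum_finsetSum (fun s _ => summable_sum (fun a _ => (hsum s).mul_right _))]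
          refine Finset.sum_congr rfl fun s _ => ?_
          rw [Summable.tsum_finsetSum (fun a _ => (hsum s).mul_right _)]
      _ = (1 - γ) * ∑' t : ℕ, γ ^ t * stateDist P π p0 (t + 1) s' := by
          congr 1
          refine tsum_congr fun t => ?_
          show _ = γ ^ t * ∑ s, ∑ a, stateDist P π p0 t s * π s a * P s a s'
          rw [Finset.mul_sum]
          refine Finset.sum_congr rfl fun s _ => ?_
          rw [Finset.mul_sum]
          exact Finset.sum_congr rfl fun a _ => by ring
  rw [key]
  have hsplit : (∑' t : ℕ, γ ^ t * stateDist P π p0 t s')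
      = p0 s' + ∑' t : ℕ, γ ^ (t + 1) * stateDist P π p0 (t + 1) s' := by
    rw [Summable.tsum_eq_zero_add (hsum s')]
    simp [stateDist]
  show (1 - γ) * ∑' t : ℕ, γ ^ t * stateDist P π p0 t s' = _
  rw [hsplit]
  have hshift : ∑' t : ℕ, γ ^ (t + 1) * stateDist P π p0 (t + 1) s'
      = γ * ∑' t : ℕ, γ ^ t * stateDist P π p0 (t + 1) s' := by
    rw [← tsum_mul_left]
    exact tsum_congr fun t => by ring
  rw [hshift]
  ring

lemma triple_swap (g : S → A → S → ℝ) (f : S → ℝ) :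
    ∑ s, ∑ a, ∑ s', g s a s' * f s' = ∑ s', (∑ s, ∑ a, g s a s') * f s' := by
  calc ∑ s, ∑ a, ∑ s', g s a s' * f s'
      = ∑ s, ∑ s', ∑ a, g s a s' * f s' :=
        Finset.sum_congr rfl fun s _ => Finset.sum_comm
    _ = ∑ s', ∑ s, ∑ a, g s a s' * f s' := Finset.sum_comm
    _ = ∑ s', (∑ s, ∑ a, g s a s') * f s' := by simp_rw [Finset.sum_mul]

end helper

/-- The functional `L(w,f)` of Liu et al. (discounted case), with `s ~ d^μ`, `a ~ μ(·|s)`,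
`s' ~ P(·|s,a)`:
`L(w,f) = γ E[(w(s)π(a|s)/μ(a|s) − w(s')) f(s')] + (1−γ) E_{s~p0}[(1 − w(s)) f(s)]`. -/
def Lfun {S A : Type} [Fintype S] [Fintype A]
    (γ : ℝ) (P : S → A → S → ℝ) (π μ : S → A → ℝ) (dμ p0 : S → ℝ) (w f : S → ℝ) : ℝ :=
  γ * ∑ s, ∑ a, ∑ s', dμ s * μ s a * P s a s' * (w s * (π s a / μ s a) - w s') * f s' +
    (1 - γ) * ∑ s, p0 s * (1 - w s) * f s

/-- If `d^μ(s) > 0` for all `s` and `μ(a|s) > 0` for all `(s,a)`, then the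
exact distribution ratio `w(s) = d^π(s)/d^μ(s)` satisfies `L(w,f) = 0` for every `f`. -/
theorem ratio_satisfies_L_eq_zero {S A : Type} [Fintype S] [Fintype A]
    (γ : ℝ) (hγ0 : 0 < γ) (hγ1 : γ < 1)
    (P : S → A → S → ℝ) (hP0 : ∀ s a s', 0 ≤ P s a s') (hP1 : ∀ s a, ∑ s', P s a s' = 1)
    (p0 : S → ℝ) (hp00 : ∀ s, 0 ≤ p0 s) (hp01 : ∑ s, p0 s = 1)
    (π : S → A → ℝ) (hπ0 : ∀ s a, 0 ≤ π s a) (hπ1 : ∀ s, ∑ a, π s a = 1)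
    (μ : S → A → ℝ) (hμ0 : ∀ s a, 0 < μ s a) (hμ1 : ∀ s, ∑ a, μ s a = 1)
    (hdμ : ∀ s, 0 < discDist γ P μ p0 s) :
    ∀ f : S → ℝ,
      Lfun γ P π μ (discDist γ P μ p0) p0
        (fun s => discDist γ P π p0 s / discDist γ P μ p0 s) f = 0 := by
  intro f
  set D := discDist γ P π p0 with hD
  set Dμ := discDist γ P μ p0 with hDμ
  set w : S → ℝ := fun s => D s / Dμ s with hwdef
  have hw : ∀ s, Dμ s * w s = D s := fun s => mul_div_cancel₀ _ (hdμ s).ne'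
  have hterm : ∀ s a s',
      Dμ s * μ s a * P s a s' * (w s * (π s a / μ s a) - w s') * f s'
        = D s * π s a * P s a s' * f s'
          - Dμ s * μ s a * P s a s' * (w s' * f s') := by
    intro s a s'
    have hμne : μ s a ≠ 0 := (hμ0 s a).ne'
    have e2 : μ s a * (π s a / μ s a) = π s a := by
      rw [mul_comm]; exact div_mul_cancel₀ _ hμne
    calc Dμ s * μ s a * P s a s' * (w s * (π s a / μ s a) - w s') * f s'
        = (Dμ s * w s) * (μ s a * (π s a / μ s a)) * P s a s' * f s'
          - Dμ s * μ s a * P s a s' * (w s' * f s') := by ring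
      _ = _ := by rw [hw s, e2]
  have step1 : Lfun γ P π μ Dμ p0 w f
      = γ * (∑ s', (nextDist P π D s') * f s'
            - ∑ s', (nextDist P μ Dμ s') * (w s' * f s'))
        + (1 - γ) * ∑ s, p0 s * (1 - w s) * f s := by
    unfold Lfun
    congr 1
    congr 1
    simp_rw [hterm, Finset.sum_sub_distrib]
    congr 1
    · exact triple_swap _ _
    · exact triple_swap _ (fun s' => w s' * f s')
  rw [step1]
  have hbπ := bellman hγ0 hγ1 P hP0 hP1 π hπ0 hπ1 p0 hp00 hp01
  have hbμ := bellman hγ0 hγ1 P hP0 hP1 μ (fun s a => (hμ0 s a).le) hμ1 p0 hp00 hp01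
  have hNπ : ∀ s', γ * nextDist P π D s' = D s' - (1 - γ) * p0 s' := by
    intro s'; have := hbπ s'; rw [← hD] at this; linarith
  have hNμ : ∀ s', γ * nextDist P μ Dμ s' = Dμ s' - (1 - γ) * p0 s' := by
    intro s'; have := hbμ s'; rw [← hDμ] at this; linarith
  rw [mul_sub, Finset.mul_sum, Finset.mul_sum, Finset.mul_sum]
  rw [← Finset.sum_sub_distrib, ← Finset.sum_add_distrib]
  refine Finset.sum_eq_zero fun s' _ => ?_
  have h1 : γ * (nextDist P π D s' * f s') = (D s' - (1 - γ) * p0 s') * f s' := by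
    rw [← mul_assoc, hNπ]
  have h2 : γ * (nextDist P μ Dμ s' * (w s' * f s'))
      = (Dμ s' - (1 - γ) * p0 s') * (w s' * f s') := by
    rw [← mul_assoc, hNμ]
  rw [h1, h2]
  linear_combination (-(f s')) * hw s'
end
end

section
/- Let S, A be finite sets, P(s'|s,a) a transition kernel, and π, μ policies with μ(a|s) > 0 for all (s,a). Let d^μ be a probability distribution on S with d^μ(s) > 0 for all s which is stationary for the μ-induced chain, i.e., Σ_{s,a} d^μ(s) μ(a|s) P(s'|s,a) = d^μ(s') for all s'. For w : S → ℝ define L₁(w,f) = Σ_{s,a,s'} d^μ(s) μ(a|s) P(s'|s,a) [ w(s) π(a|s)/μ(a|s) − w(s') ] f(s'). Then L₁(w,f) = 0 for all f : S → ℝ if and only if the signed measure q(s) = d^μ(s) w(s) is stationary for the π-induced chain, i.e., Σ_{s,a} q(s) π(a|s) P(s'|s,a) = q(s') for all s'. Consequently, if w ≥ 0 with Σ_s d^μ(s) w(s) = 1 and the π-induced chain has a unique stationary distribution d^π, then L₁(w,f) = 0 for all f holds if and only if w(s) = d^π(s)/d^μ(s) for all s. -/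
open scoped BigOperators
open Finset

noncomputable section

/-- The average-reward (γ = 1) functional `L₁(w,f)` of Liu et al., with `s ~ d^μ`
(stationary for the `μ`-induced chain), `a ~ μ(·|s)`, `s' ~ P(·|s,a)`:
`L₁(w,f) = E[(w(s)π(a|s)/μ(a|s) − w(s')) f(s')]`. -/
def Lone {S A : Type} [Fintype S] [Fintype A]
    (P : S → A → S → ℝ) (π μ : S → A → ℝ) (dμ : S → ℝ) (w f : S → ℝ) : ℝ :=
  ∑ s, ∑ a, ∑ s', dμ s * μ s a * P s a s' * (w s * (π s a / μ s a) - w s') * f s'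

/-- `L₁(w,f) = 0` for all `f` iff the signed measure `q(s) = d^μ(s) w(s)`
is stationary for the `π`-induced chain.  Consequently, if `w ≥ 0` is normalized by
`Σ_s d^μ(s) w(s) = 1` and the `π`-induced chain has a unique stationary distribution `d^π`,
then `L₁(w,·) ≡ 0` iff `w(s) = d^π(s)/d^μ(s)` for all `s`. -/
theorem Lone_eq_zero_iff_stationary {S A : Type} [Fintype S] [Fintype A]
    (P : S → A → S → ℝ) (hP0 : ∀ s a s', 0 ≤ P s a s') (hP1 : ∀ s a, ∑ s', P s a s' = 1)
    (π : S → A → ℝ) (hπ0 : ∀ s a, 0 ≤ π s a) (hπ1 : ∀ s, ∑ a, π s a = 1)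
    (μ : S → A → ℝ) (hμ0 : ∀ s a, 0 < μ s a) (hμ1 : ∀ s, ∑ a, μ s a = 1)
    (dμ : S → ℝ) (hdμ0 : ∀ s, 0 < dμ s) (hdμ1 : ∑ s, dμ s = 1)
    (hstat : ∀ s', ∑ s, ∑ a, dμ s * μ s a * P s a s' = dμ s')
    (w : S → ℝ) :
    ((∀ f : S → ℝ, Lone P π μ dμ w f = 0) ↔
        ∀ s', ∑ s, ∑ a, (dμ s * w s) * π s a * P s a s' = dμ s' * w s') ∧
      ((∀ s, 0 ≤ w s) → (∑ s, dμ s * w s = 1) →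
        ∀ dπ : S → ℝ, (∀ s, 0 ≤ dπ s) → (∑ s, dπ s = 1) →
          (∀ s', ∑ s, ∑ a, dπ s * π s a * P s a s' = dπ s') →
          (∀ q : S → ℝ, (∀ s, 0 ≤ q s) → (∑ s, q s = 1) →
            (∀ s', ∑ s, ∑ a, q s * π s a * P s a s' = q s') → q = dπ) →
          ((∀ f : S → ℝ, Lone P π μ dμ w f = 0) ↔ ∀ s, w s = dπ s / dμ s)) := by

  have key : ∀ f : S → ℝ, Lone P π μ dμ w f =
      ∑ s', ((∑ s, ∑ a, (dμ s * w s) * π s a * P s a s') - dμ s' * w s') * f s' := by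
    intro f
    unfold Lone
    have term : ∀ s a s', dμ s * μ s a * P s a s' * (w s * (π s a / μ s a) - w s') * f s'
        = (dμ s * w s) * π s a * P s a s' * f s'
          - dμ s * μ s a * P s a s' * (w s' * f s') := by
      intro s a s'
      have h := (hμ0 s a).ne'
      field_simp
    simp only [term, Finset.sum_sub_distrib]
    have h1 : ∑ s, ∑ a, ∑ s', (dμ s * w s) * π s a * P s a s' * f s'
        = ∑ s', ((∑ s, ∑ a, (dμ s * w s) * π s a * P s a s')) * f s' := by
      calc ∑ s, ∑ a, ∑ s', (dμ s * w s) * π s a * P s a s' * f s'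
          = ∑ s, ∑ s', ∑ a, (dμ s * w s) * π s a * P s a s' * f s' :=
            Finset.sum_congr rfl fun s _ => Finset.sum_comm
        _ = ∑ s', ∑ s, ∑ a, (dμ s * w s) * π s a * P s a s' * f s' :=
            Finset.sum_comm
        _ = ∑ s', ((∑ s, ∑ a, (dμ s * w s) * π s a * P s a s')) * f s' := by
            refine Finset.sum_congr rfl fun s' _ => ?_
            rw [Finset.sum_mul]
            exact Finset.sum_congr rfl fun s _ => (Finset.sum_mul _ _ _).symm
    have h2 : ∑ s, ∑ a, ∑ s', dμ s * μ s a * P s a s' * (w s' * f s')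
        = ∑ s', dμ s' * (w s' * f s') := by
      calc ∑ s, ∑ a, ∑ s', dμ s * μ s a * P s a s' * (w s' * f s')
          = ∑ s, ∑ s', ∑ a, dμ s * μ s a * P s a s' * (w s' * f s') :=
            Finset.sum_congr rfl fun s _ => Finset.sum_comm
        _ = ∑ s', ∑ s, ∑ a, dμ s * μ s a * P s a s' * (w s' * f s') :=
            Finset.sum_comm
        _ = ∑ s', (∑ s, ∑ a, dμ s * μ s a * P s a s') * (w s' * f s') := by
            refine Finset.sum_congr rfl fun s' _ => ?_
            rw [Finset.sum_mul]
            exact Finset.sum_congr rfl fun s _ => (Finset.sum_mul _ _ _).symm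
        _ = ∑ s', dμ s' * (w s' * f s') := by
            exact Finset.sum_congr rfl fun s' _ => by rw [hstat s']
    rw [h1, h2, ← Finset.sum_sub_distrib]
    exact Finset.sum_congr rfl fun s' _ => by ring
  classical
  have main : (∀ f : S → ℝ, Lone P π μ dμ w f = 0) ↔
      ∀ s', ∑ s, ∑ a, (dμ s * w s) * π s a * P s a s' = dμ s' * w s' := by
    constructor
    · intro h s'
      have := h (fun t => if t = s' then 1 else 0)
      rw [key] at this
      simp only [mul_ite, mul_one, mul_zero, Finset.sum_ite_eq',
        Finset.mem_univ, if_true] at this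
      linarith
    · intro h f
      rw [key]
      apply Finset.sum_eq_zero
      intro s' _
      rw [h s', sub_self, zero_mul]
  refine ⟨main, ?_⟩
  intro hw0 hw1 dπ hdπ0 hdπ1 hdπstat huniq
  constructor
  · intro hL s
    have hq := main.mp hL
    have heq := huniq (fun s => dμ s * w s)
      (fun s => mul_nonneg (hdμ0 s).le (hw0 s)) hw1 hq
    have hs : dμ s * w s = dπ s := congrFun heq s
    rw [eq_div_iff (hdμ0 s).ne']
    linarith [hs]
  · intro hw
    apply main.mpr
    intro s'
    have hws : ∀ s, dμ s * w s = dπ s := by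
      intro s
      rw [hw s, mul_comm, div_mul_cancel₀ _ (hdμ0 s).ne']
    simp only [hws]
    exact hdπstat s'
end
end

section
/- Let f : ℝ^d → ℝ be differentiable with L-Lipschitz gradient (L > 0) and bounded below by f* ∈ ℝ. On a probability space, let X_1 = x_1 be deterministic and X_{k+1} = X_k − (1/L)(∇f(X_k) + D_k) for k = 1, …, K, where the random perturbations D_k satisfy, conditionally on the history F_k = σ(X_1, …, X_k): ‖E[D_k | F_k]‖ ≤ B_k almost surely and E[‖D_k‖² | F_k] ≤ 2(σ_k² + B_k²) almost surely, for constants B_k, σ_k ≥ 0. Then (1/K) Σ_{k=1}^K E[‖∇f(X_k)‖²] ≤ (2L/K)(f(x_1) − f*) + (2/K) Σ_{k=1}^K (σ_k² + B_k²). -/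
open MeasureTheory

noncomputable section

open InnerProductSpace in
lemma descent_lemma {d : ℕ} (f : EuclideanSpace ℝ (Fin d) → ℝ) (L : ℝ) (hL : 0 < L)
    (hf : Differentiable ℝ f)
    (hlip : ∀ x y, ‖gradient f x - gradient f y‖ ≤ L * ‖x - y‖)
    (x y : EuclideanSpace ℝ (Fin d)) :
    f y ≤ f x + (inner ℝ (gradient f x) (y - x) : ℝ) + L / 2 * ‖y - x‖ ^ 2 := by
  set v := y - x with hv
  set c : ℝ := inner ℝ (gradient f x) v with hc
  have hφ : ∀ t : ℝ, HasDerivAt (fun t : ℝ => f (x + t • v))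
      (inner ℝ (gradient f (x + t • v)) v : ℝ) t := by
    intro t
    have h1 : HasDerivAt (fun t : ℝ => x + t • v) v t := by
      simpa using ((hasDerivAt_id t).smul_const v).const_add x
    have h2 : HasFDerivAt f (toDual ℝ _ (gradient f (x + t • v))) (x + t • v) :=
      (hf _).hasGradientAt.hasFDerivAt
    exact (h2.comp_hasDerivAt t h1).congr_deriv (by simp [toDual_apply_apply])
  set g : ℝ → ℝ := fun t => f (x + t • v) - t * c - t ^ 2 * (L / 2 * ‖v‖ ^ 2) with hg
  have hg' : ∀ t : ℝ, HasDerivAt g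
      ((inner ℝ (gradient f (x + t • v)) v : ℝ) - c - 2 * t * (L / 2 * ‖v‖ ^ 2)) t := by
    intro t
    have h3 : HasDerivAt (fun t : ℝ => t * c) c t := hasDerivAt_mul_const c
    have h4 : HasDerivAt (fun t : ℝ => t ^ 2 * (L / 2 * ‖v‖ ^ 2))
        (2 * t * (L / 2 * ‖v‖ ^ 2)) t := by
      simpa using (hasDerivAt_pow 2 t).mul_const (L / 2 * ‖v‖ ^ 2)
    exact ((hφ t).sub h3).sub h4
  have hmono : AntitoneOn g (Set.Icc (0:ℝ) 1) := by
    apply antitoneOn_of_deriv_nonpos (convex_Icc 0 1)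
    · exact (Differentiable.continuous fun t => (hg' t).differentiableAt).continuousOn
    · exact fun t _ => (hg' t).differentiableAt.differentiableWithinAt
    · intro t ht
      rw [interior_Icc] at ht
      rw [(hg' t).deriv]
      have hb : (inner ℝ (gradient f (x + t • v) - gradient f x) v : ℝ) ≤ L * t * ‖v‖ ^ 2 := by
        calc (inner ℝ (gradient f (x + t • v) - gradient f x) v : ℝ)
            ≤ ‖gradient f (x + t • v) - gradient f x‖ * ‖v‖ := real_inner_le_norm _ _
          _ ≤ (L * ‖(x + t • v) - x‖) * ‖v‖ :=
              mul_le_mul_of_nonneg_right (hlip _ _) (norm_nonneg _)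
          _ = L * t * ‖v‖ ^ 2 := by
              rw [add_sub_cancel_left, norm_smul, Real.norm_eq_abs, abs_of_pos ht.1]; ring
      rw [inner_sub_left] at hb
      linarith
  have h01 : g 1 ≤ g 0 :=
    hmono (Set.left_mem_Icc.2 zero_le_one) (Set.right_mem_Icc.2 zero_le_one) zero_le_one
  have hy : x + v = y := by rw [hv]; abel
  simp only [hg, one_smul, zero_smul, add_zero, one_pow, one_mul, hy] at h01
  norm_num at h01
  linarith

/-- Convergence of stochastic gradient descent with step size `1/L` and a
biased noisy gradient oracle: if `f : ℝ^d → ℝ` is differentiable with `L`-Lipschitz gradient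
and bounded below by `f*`, `X 1 = x₁` is deterministic,
`X (k+1) = X k − (1/L)(∇f(X k) + D k)` for `k = 1, …, K`, and conditionally on the history
`F k = σ(X 1, …, X k)` the perturbations satisfy `‖E[D k | F k]‖ ≤ B k` and
`E[‖D k‖² | F k] ≤ 2(σ k² + B k²)` almost surely, then
`(1/K) Σ_{k=1}^K E‖∇f(X k)‖² ≤ (2L/K)(f(x₁) − f*) + (2/K) Σ_{k=1}^K (σ k² + B k²)`. -/
theorem sgd_biased_oracle_convergence {d : ℕ} {Ω : Type} [MeasurableSpace Ω]
    (ℙ : Measure Ω) [IsProbabilityMeasure ℙ]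
    (f : EuclideanSpace ℝ (Fin d) → ℝ) (L : ℝ) (hL : 0 < L)
    (hf : Differentiable ℝ f)
    (hlip : ∀ x y, ‖gradient f x - gradient f y‖ ≤ L * ‖x - y‖)
    (fstar : ℝ) (hbdd : ∀ x, fstar ≤ f x)
    (K : ℕ) (x1 : EuclideanSpace ℝ (Fin d))
    (X D : ℕ → Ω → EuclideanSpace ℝ (Fin d))
    (hX1 : X 1 = fun _ => x1)
    (hXmeas : ∀ k, Measurable (X k)) (hDmeas : ∀ k, Measurable (D k))
    (hrec : ∀ k, 1 ≤ k → k ≤ K →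
      X (k + 1) = fun ω => X k ω - (1 / L) • (gradient f (X k ω) + D k ω))
    (B σ' : ℕ → ℝ) (hB : ∀ k, 0 ≤ B k) (hσ : ∀ k, 0 ≤ σ' k)
    (F : ℕ → MeasurableSpace Ω)
    (hF : ∀ k, F k = ⨆ i ∈ Finset.Icc 1 k, MeasurableSpace.comap (X i) inferInstance)
    (hDint : ∀ k, Integrable (D k) ℙ)
    (hDsq : ∀ k, Integrable (fun ω => ‖D k ω‖ ^ 2) ℙ)
    (hbias : ∀ k, 1 ≤ k → k ≤ K → ∀ᵐ ω ∂ℙ, ‖(ℙ[D k | F k]) ω‖ ≤ B k)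
    (hvar : ∀ k, 1 ≤ k → k ≤ K → ∀ᵐ ω ∂ℙ,
      (ℙ[(fun ω' => ‖D k ω'‖ ^ 2) | F k]) ω ≤ 2 * (σ' k ^ 2 + B k ^ 2)) :
    (1 / (K : ℝ)) * ∑ k ∈ Finset.Icc 1 K, ∫ ω, ‖gradient f (X k ω)‖ ^ 2 ∂ℙ ≤
      (2 * L / (K : ℝ)) * (f x1 - fstar) +
        (2 / (K : ℝ)) * ∑ k ∈ Finset.Icc 1 K, (σ' k ^ 2 + B k ^ 2) := by
  -- pointwise key inequality
  have key : ∀ k, 1 ≤ k → k ≤ K → ∀ ω,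
      ‖gradient f (X k ω)‖ ^ 2 ≤
        2 * L * (f (X k ω) - f (X (k + 1) ω)) + ‖D k ω‖ ^ 2 := by
    intro k h1 h2 ω
    have hx : X (k + 1) ω = X k ω - (1 / L) • (gradient f (X k ω) + D k ω) := by
      rw [hrec k h1 h2]
    set x := X k ω
    set g := gradient f x with hgdef
    set Dk := D k ω
    have hd := descent_lemma f L hL hf hlip x (X (k + 1) ω)
    rw [hx] at hd
    have hsub : x - (1 / L) • (g + Dk) - x = -((1 / L) • (g + Dk)) := by abel
    rw [hsub] at hd
    set G := ‖g‖ ^ 2 with hG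
    set P : ℝ := inner ℝ g Dk with hP
    set Q := ‖Dk‖ ^ 2 with hQ
    have hin : (inner ℝ g (-((1 / L) • (g + Dk))) : ℝ) = -(1 / L) * (G + P) := by
      rw [inner_neg_right, real_inner_smul_right, inner_add_right,
        real_inner_self_eq_norm_sq]
      ring
    have hnm : ‖-((1 / L) • (g + Dk))‖ ^ 2 = (1 / L) ^ 2 * (G + 2 * P + Q) := by
      rw [norm_neg, norm_smul, mul_pow, norm_add_sq_real, Real.norm_eq_abs,
        abs_of_pos (by positivity : (0:ℝ) < 1 / L)]
    rw [hin, hnm] at hd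
    have hL' : L ≠ 0 := ne_of_gt hL
    have e1 : L / 2 * ((1 / L) ^ 2 * (G + 2 * P + Q)) = (G + 2 * P + Q) / (2 * L) := by
      field_simp
    have e3 : (G + P) / L - (G + 2 * P + Q) / (2 * L) = (G - Q) / (2 * L) := by
      field_simp; ring
    have h3 : (G - Q) / (2 * L) ≤ f x - f (x - (1 / L) • (g + Dk)) := by
      have e2 : -(1 / L) * (G + P) = -((G + P) / L) := by ring
      rw [e1, e2] at hd
      linarith
    have h4 : G - Q ≤ 2 * L * (f x - f (x - (1 / L) • (g + Dk))) := by
      have := mul_le_mul_of_nonneg_left h3 (by positivity : (0:ℝ) ≤ 2 * L)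
      rwa [mul_div_cancel₀ _ (by positivity : (2:ℝ) * L ≠ 0)] at this
    rw [hx]
    linarith
  -- measurability facts
  have hgc : Continuous (gradient f) := by
    have : LipschitzWith L.toNNReal (gradient f) := by
      apply LipschitzWith.of_dist_le_mul
      intro a b
      rw [dist_eq_norm, dist_eq_norm, Real.coe_toNNReal L hL.le]
      exact hlip a b
    exact this.continuous
  have hfm : ∀ k, AEStronglyMeasurable (fun ω => f (X k ω)) ℙ := fun k =>
    (hf.continuous.measurable.comp (hXmeas k)).aestronglyMeasurable
  have hGm : ∀ k, AEStronglyMeasurable (fun ω => ‖gradient f (X k ω)‖ ^ 2) ℙ := fun k =>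
    (((hgc.norm.pow 2).measurable).comp (hXmeas k)).aestronglyMeasurable
  -- integrability of f ∘ X k
  have hfint : ∀ k, 1 ≤ k → k ≤ K + 1 → Integrable (fun ω => f (X k ω)) ℙ := by
    intro k
    induction k with
    | zero => omega
    | succ n ih =>
      intro _ h2
      by_cases hn : n = 0
      · subst hn
        rw [hX1]
        exact integrable_const _
      · have hn1 : 1 ≤ n := Nat.one_le_iff_ne_zero.2 hn
        have hnK : n ≤ K := by omega
        have hprev := ih hn1 (by omega)
        apply Integrable.mono'
          (g := fun ω => |f (X n ω)| + ‖D n ω‖ ^ 2 / (2 * L) + |fstar|)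
        · exact (hprev.abs.add ((hDsq n).div_const (2 * L))).add (integrable_const _)
        · exact hfm (n + 1)
        · refine Filter.Eventually.of_forall fun ω => ?_
          have hk := key n hn1 hnK ω
          have hGnn : (0:ℝ) ≤ ‖gradient f (X n ω)‖ ^ 2 := by positivity
          have hub : f (X (n + 1) ω) ≤ f (X n ω) + ‖D n ω‖ ^ 2 / (2 * L) := by
            have h5 : (f (X (n + 1) ω) - f (X n ω)) * (2 * L) ≤ ‖D n ω‖ ^ 2 := by
              nlinarith [hk, hGnn]
            have h6 := (le_div_iff₀ (by positivity : (0:ℝ) < 2 * L)).2 h5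
            linarith
          have hq : (0:ℝ) ≤ ‖D n ω‖ ^ 2 / (2 * L) := by positivity
          rw [Real.norm_eq_abs]
          refine abs_le.2 ⟨?_, ?_⟩
          · have := hbdd (X (n + 1) ω)
            have := neg_abs_le fstar
            have := abs_nonneg (f (X n ω))
            linarith
          · have := le_abs_self (f (X n ω))
            have := abs_nonneg fstar
            linarith
  -- integrability of the squared-gradient terms
  have hGint : ∀ k, 1 ≤ k → k ≤ K → Integrable (fun ω => ‖gradient f (X k ω)‖ ^ 2) ℙ := by
    intro k h1 h2
    apply Integrable.mono'
      (g := fun ω => 2 * L * (f (X k ω) - f (X (k + 1) ω)) + ‖D k ω‖ ^ 2)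
    · have hint1 : Integrable (fun ω => f (X k ω) - f (X (k + 1) ω)) ℙ :=
        (hfint k h1 (by omega)).sub (hfint (k + 1) (by omega) (by omega))
      have hint2 : Integrable (fun ω => 2 * L * (f (X k ω) - f (X (k + 1) ω))) ℙ :=
        hint1.const_mul (2 * L)
      exact hint2.add (hDsq k)
    · exact hGm k
    · refine Filter.Eventually.of_forall fun ω => ?_
      rw [Real.norm_eq_abs, abs_of_nonneg (by positivity)]
      exact key k h1 h2 ω
  -- history σ-algebras are sub-σ-algebras
  have hFle : ∀ k, F k ≤ ‹MeasurableSpace Ω› := by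
    intro k
    rw [hF k]
    exact iSup₂_le fun i _ => (hXmeas i).comap_le
  -- second moment bound
  have hDqE : ∀ k, 1 ≤ k → k ≤ K →
      ∫ ω, ‖D k ω‖ ^ 2 ∂ℙ ≤ 2 * (σ' k ^ 2 + B k ^ 2) := by
    intro k h1 h2
    rw [← integral_condExp (hFle k) (f := fun ω' => ‖D k ω'‖ ^ 2)]
    calc ∫ ω, (ℙ[(fun ω' => ‖D k ω'‖ ^ 2) | F k]) ω ∂ℙ
        ≤ ∫ _ω, 2 * (σ' k ^ 2 + B k ^ 2) ∂ℙ :=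
          integral_mono_ae integrable_condExp (integrable_const _) (hvar k h1 h2)
      _ = 2 * (σ' k ^ 2 + B k ^ 2) := by simp
  -- per-step expected inequality
  set a : ℕ → ℝ := fun k => ∫ ω, f (X k ω) ∂ℙ with ha
  have hstep : ∀ k, 1 ≤ k → k ≤ K →
      ∫ ω, ‖gradient f (X k ω)‖ ^ 2 ∂ℙ ≤
        2 * L * (a k - a (k + 1)) + 2 * (σ' k ^ 2 + B k ^ 2) := by
    intro k h1 h2
    have hint1 : Integrable (fun ω => f (X k ω) - f (X (k + 1) ω)) ℙ :=
      (hfint k h1 (by omega)).sub (hfint (k + 1) (by omega) (by omega))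
    have hint2 : Integrable (fun ω => 2 * L * (f (X k ω) - f (X (k + 1) ω))) ℙ :=
      hint1.const_mul (2 * L)
    calc ∫ ω, ‖gradient f (X k ω)‖ ^ 2 ∂ℙ
        ≤ ∫ ω, (2 * L * (f (X k ω) - f (X (k + 1) ω)) + ‖D k ω‖ ^ 2) ∂ℙ :=
          integral_mono (hGint k h1 h2) (hint2.add (hDsq k))
            (fun ω => key k h1 h2 ω)
      _ = 2 * L * (a k - a (k + 1)) + ∫ ω, ‖D k ω‖ ^ 2 ∂ℙ := by
          rw [integral_add hint2 (hDsq k), integral_const_mul,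
            integral_sub (hfint k h1 (by omega)) (hfint (k + 1) (by omega) (by omega))]
      _ ≤ 2 * L * (a k - a (k + 1)) + 2 * (σ' k ^ 2 + B k ^ 2) := by
          linarith [hDqE k h1 h2]
  -- telescoping
  have htel : ∑ k ∈ Finset.Icc 1 K, (a k - a (k + 1)) = a 1 - a (K + 1) := by
    rw [← Finset.Ico_add_one_right_eq_Icc, Finset.sum_Ico_eq_sum_range]
    norm_num
    simp only [Nat.add_comm 1]
    have h := Finset.sum_range_sub' (fun i => a (i + 1)) K
    simp only [Finset.sum_sub_distrib, Nat.zero_add] at h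
    linarith
  have ha1 : a 1 = f x1 := by simp [ha, hX1]
  have haK : fstar ≤ a (K + 1) :=
    le_of_eq_of_le (by simp) (integral_mono (integrable_const _)
      (hfint (K + 1) (by omega) (by omega)) (fun ω => hbdd _))
  -- sum the per-step inequalities
  have hsum : ∑ k ∈ Finset.Icc 1 K, ∫ ω, ‖gradient f (X k ω)‖ ^ 2 ∂ℙ ≤
      2 * L * (f x1 - fstar) + ∑ k ∈ Finset.Icc 1 K, 2 * (σ' k ^ 2 + B k ^ 2) := by
    calc ∑ k ∈ Finset.Icc 1 K, ∫ ω, ‖gradient f (X k ω)‖ ^ 2 ∂ℙ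
        ≤ ∑ k ∈ Finset.Icc 1 K,
            (2 * L * (a k - a (k + 1)) + 2 * (σ' k ^ 2 + B k ^ 2)) :=
          Finset.sum_le_sum fun k hk =>
            hstep k (Finset.mem_Icc.1 hk).1 (Finset.mem_Icc.1 hk).2
      _ = 2 * L * (a 1 - a (K + 1)) + ∑ k ∈ Finset.Icc 1 K, 2 * (σ' k ^ 2 + B k ^ 2) := by
          rw [Finset.sum_add_distrib, ← Finset.mul_sum, htel]
      _ ≤ 2 * L * (f x1 - fstar) + ∑ k ∈ Finset.Icc 1 K, 2 * (σ' k ^ 2 + B k ^ 2) := by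
          have : a 1 - a (K + 1) ≤ f x1 - fstar := by rw [ha1]; linarith
          have := mul_le_mul_of_nonneg_left this (by positivity : (0:ℝ) ≤ 2 * L)
          linarith
  rcases Nat.eq_zero_or_pos K with h0 | hKpos
  · subst h0; simp
  · have hKr : (0:ℝ) < K := by exact_mod_cast hKpos
    calc (1 / (K : ℝ)) * ∑ k ∈ Finset.Icc 1 K, ∫ ω, ‖gradient f (X k ω)‖ ^ 2 ∂ℙ
        ≤ (1 / (K : ℝ)) *
            (2 * L * (f x1 - fstar) + ∑ k ∈ Finset.Icc 1 K, 2 * (σ' k ^ 2 + B k ^ 2)) :=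
          mul_le_mul_of_nonneg_left hsum (by positivity)
      _ = (2 * L / (K : ℝ)) * (f x1 - fstar) +
            (2 / (K : ℝ)) * ∑ k ∈ Finset.Icc 1 K, (σ' k ^ 2 + B k ^ 2) := by
          rw [← Finset.mul_sum]
          ring
end
end

section
/- Let f : ℝ^d → ℝ (the expected return as a function of policy parameters) be differentiable with L-Lipschitz gradient (L > 0) and 0 ≤ f(x) ≤ V_max for all x. Let (Z, Σ, ν) be a probability space, and for each θ ∈ ℝ^d let w_θ, Q_θ : Z → ℝ and h_θ : Z → ℝ^d be measurable with ‖h_θ(z)‖ ≤ C ν-a.e., |Q_θ(z)| ≤ V_max ν-a.e., ∫ w_θ² dν ≤ σ_w², and the gradient identity ∇f(θ) = ∫ w_θ(z) Q_θ(z) h_θ(z) dν(z). Run gradient ascent Θ_{k+1} = Θ_k + (1/L) ζ_k for k = 1, …, K from a deterministic Θ_1, where ζ_k = ∫ ŵ_k(z) Q̂_k(z) h_{Θ_k}(z) dν(z) and ŵ_k, Q̂_k are random estimates, measurable with respect to the history through step k, satisfying almost surely ∫ (w_{Θ_k} − ŵ_k)² dν ≤ ε_{w,k}² and ∫ (Q_{Θ_k}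 − Q̂_k)² dν ≤ ε_{Q,k}². Then (1/K) Σ_{k=1}^K E[‖∇f(Θ_k)‖²] ≤ 2 L V_max / K + (4 C² / K) Σ_{k=1}^K ( ε_{w,k}² V_max² + ε_{Q,k}² (σ_w + ε_{w,k})² ). -/
open MeasureTheory

noncomputable section

section Auxiliary


variable {Z : Type*} [MeasurableSpace Z] {ν : Measure Z}

lemma cs_integrable {u v : Z → ℝ} (hu : AEStronglyMeasurable u ν) (hv : AEStronglyMeasurable v ν)
    (hu2 : Integrable (fun z => u z ^ 2) ν) (hv2 : Integrable (fun z => v z ^ 2) ν) :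
    Integrable (fun z => u z * v z) ν := by
  refine Integrable.mono' ((hu2.add hv2).div_const 2) (hu.mul hv) ?_
  filter_upwards with z
  simp only [Pi.add_apply, Real.norm_eq_abs, abs_mul]
  nlinarith [sq_nonneg (|u z| - |v z|), sq_abs (u z), sq_abs (v z),
    abs_nonneg (u z), abs_nonneg (v z)]

lemma cs_bound {u v : Z → ℝ} (hu : AEStronglyMeasurable u ν) (hv : AEStronglyMeasurable v ν)
    (hu2 : Integrable (fun z => u z ^ 2) ν) (hv2 : Integrable (fun z => v z ^ 2) ν)
    {a b : ℝ} (ha : 0 ≤ a) (hb : 0 ≤ b)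
    (hua : ∫ z, u z ^ 2 ∂ν ≤ a ^ 2) (hvb : ∫ z, v z ^ 2 ∂ν ≤ b ^ 2) :
    ∫ z, |u z * v z| ∂ν ≤ a * b := by
  by_cases hA : ∫ z, u z ^ 2 ∂ν = 0
  · have hu0 : ∀ᵐ z ∂ν, u z ^ 2 = 0 := by
      have := (integral_eq_zero_iff_of_nonneg (fun z => sq_nonneg (u z)) hu2).1 hA
      exact this
    have : ∀ᵐ z ∂ν, |u z * v z| = 0 := by
      filter_upwards [hu0] with z hz
      simp [pow_eq_zero_iff] at hz
      simp [hz]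
    rw [integral_congr_ae this]
    simp [mul_nonneg ha hb]
  · have hA0 : 0 < ∫ z, u z ^ 2 ∂ν :=
      lt_of_le_of_ne (integral_nonneg fun z => sq_nonneg (u z)) (Ne.symm hA)
    set A := ∫ z, u z ^ 2 ∂ν with hAdef
    set B := ∫ z, v z ^ 2 ∂ν with hBdef
    have hB0 : 0 ≤ B := integral_nonneg fun z => sq_nonneg (v z)
    set t : ℝ := Real.sqrt B / Real.sqrt A with htdef
    have hsA : 0 < Real.sqrt A := Real.sqrt_pos.2 hA0
    have ht0 : 0 ≤ t := div_nonneg (Real.sqrt_nonneg B) hsA.le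
    have key : ∫ z, |u z * v z| ∂ν ≤ Real.sqrt A * Real.sqrt B := by
      by_cases hB : B = 0
      · have hB' : ∫ z, v z ^ 2 ∂ν = 0 := hB
        have hv0 : ∀ᵐ z ∂ν, v z ^ 2 = 0 :=
          (integral_eq_zero_iff_of_nonneg (fun z => sq_nonneg (v z)) hv2).1 hB'
        have : ∀ᵐ z ∂ν, |u z * v z| = 0 := by
          filter_upwards [hv0] with z hz
          simp [pow_eq_zero_iff] at hz
          simp [hz]
        rw [integral_congr_ae this]
        simp [mul_nonneg (Real.sqrt_nonneg A) (Real.sqrt_nonneg B)]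
      · have hBpos : 0 < B := lt_of_le_of_ne hB0 (Ne.symm hB)
        have hsB : 0 < Real.sqrt B := Real.sqrt_pos.2 hBpos
        have htpos : 0 < t := div_pos hsB hsA
        have step : ∫ z, |u z * v z| ∂ν ≤ ∫ z, (t * u z ^ 2 + v z ^ 2 / t) / 2 ∂ν := by
          refine integral_mono_of_nonneg (Filter.Eventually.of_forall fun z => abs_nonneg _)
            (((hu2.const_mul t).add (hv2.div_const t)).div_const 2)
            (Filter.Eventually.of_forall fun z => ?_)
          simp only []
          rw [abs_mul]
          have hnn := div_nonneg (sq_nonneg (t * |u z| - |v z|))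
            (by positivity : (0:ℝ) ≤ 2 * t)
          have expand : (t * |u z| - |v z|) ^ 2 / (2 * t) =
              (t * u z ^ 2 + v z ^ 2 / t) / 2 - |u z| * |v z| := by
            have htne : t ≠ 0 := htpos.ne'
            rw [← sq_abs (u z), ← sq_abs (v z)]
            field_simp
            ring
          linarith [expand ▸ hnn]
        refine step.trans ?_
        rw [integral_div, integral_add (hu2.const_mul t) (hv2.div_const t),
          integral_const_mul, integral_div, ← hAdef, ← hBdef]
        have hAe : Real.sqrt A * Real.sqrt A = A := Real.mul_self_sqrt hA0.le
        have hBe : Real.sqrt B * Real.sqrt B = B := Real.mul_self_sqrt hBpos.le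
        have e1 : t * A = Real.sqrt A * Real.sqrt B := by
          rw [htdef, div_mul_eq_mul_div, div_eq_iff hsA.ne']; linear_combination (-Real.sqrt B) * hAe
        have e2 : B / t = Real.sqrt A * Real.sqrt B := by
          rw [htdef, div_div_eq_mul_div, div_eq_iff hsB.ne']; linear_combination (-Real.sqrt A) * hBe
        rw [e1, e2]
        linarith
    refine key.trans ?_
    have h1 : Real.sqrt A ≤ a := by
      rw [show a = Real.sqrt (a ^ 2) by rw [Real.sqrt_sq ha]]
      exact Real.sqrt_le_sqrt hua
    have h2 : Real.sqrt B ≤ b := by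
      rw [show b = Real.sqrt (b ^ 2) by rw [Real.sqrt_sq hb]]
      exact Real.sqrt_le_sqrt hvb
    exact mul_le_mul h1 h2 (Real.sqrt_nonneg B) ha

variable {E : Type*} [NormedAddCommGroup E] [NormedSpace ℝ E]

lemma smul_int {ν : Measure Z} [IsProbabilityMeasure ν] {u : Z → ℝ} {h : Z → E} {C : ℝ}
    (hu : AEStronglyMeasurable u ν) (hint : Integrable u ν)
    (hhm : AEStronglyMeasurable h ν) (hhC : ∀ᵐ z ∂ν, ‖h z‖ ≤ C) :
    Integrable (fun z => u z • h z) ν := by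
  refine Integrable.mono' (hint.abs.const_mul C) (hu.smul hhm) ?_
  filter_upwards [hhC] with z hz
  rw [norm_smul, Real.norm_eq_abs]
  calc |u z| * ‖h z‖ ≤ |u z| * C := mul_le_mul_of_nonneg_left hz (abs_nonneg _)
    _ = C * |u z| := mul_comm _ _

lemma err_core (ν : Measure Z) [IsProbabilityMeasure ν]
    {C Vmax σw εw εQ : ℝ} (hC : 0 ≤ C) (hV : 0 ≤ Vmax) (hσ : 0 ≤ σw)
    (hεw : 0 ≤ εw) (hεQ : 0 ≤ εQ)
    {w Q w' Q' : Z → ℝ} {h : Z → E}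
    (hwm : Measurable w) (hQm : Measurable Q) (hw'm : Measurable w') (hQ'm : Measurable Q')
    (hhm : AEStronglyMeasurable h ν)
    (hhC : ∀ᵐ z ∂ν, ‖h z‖ ≤ C) (hQb : ∀ᵐ z ∂ν, |Q z| ≤ Vmax)
    (hw2 : Integrable (fun z => w z ^ 2) ν) (hw2b : ∫ z, w z ^ 2 ∂ν ≤ σw ^ 2)
    (hdw2 : Integrable (fun z => (w z - w' z) ^ 2) ν)
    (hdwb : ∫ z, (w z - w' z) ^ 2 ∂ν ≤ εw ^ 2)
    (hdQ2 : Integrable (fun z => (Q z - Q' z) ^ 2) ν)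
    (hdQb : ∫ z, (Q z - Q' z) ^ 2 ∂ν ≤ εQ ^ 2) :
    ‖(∫ z, (w z * Q z) • h z ∂ν) - ∫ z, (w' z * Q' z) • h z ∂ν‖ ≤
      C * (εw * Vmax + εQ * (σw + εw)) := by
  have hQ2 : Integrable (fun z => Q z ^ 2) ν := by
    refine Integrable.mono' (integrable_const (Vmax ^ 2))
      ((hQm.pow_const 2).aestronglyMeasurable) ?_
    filter_upwards [hQb] with z hz
    rw [Real.norm_eq_abs, abs_pow]
    exact pow_le_pow_left₀ (abs_nonneg _) hz 2
  have hQ2b : ∫ z, Q z ^ 2 ∂ν ≤ Vmax ^ 2 := by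
    calc ∫ z, Q z ^ 2 ∂ν ≤ ∫ _z, Vmax ^ 2 ∂ν := by
          refine integral_mono_ae hQ2 (integrable_const _) ?_
          filter_upwards [hQb] with z hz
          calc Q z ^ 2 = |Q z| ^ 2 := (sq_abs _).symm
            _ ≤ Vmax ^ 2 := pow_le_pow_left₀ (abs_nonneg _) hz 2
      _ = Vmax ^ 2 := by simp
  have hwsm : AEStronglyMeasurable w ν := hwm.aestronglyMeasurable
  have hQsm : AEStronglyMeasurable Q ν := hQm.aestronglyMeasurable
  have hd1m : AEStronglyMeasurable (fun z => w z - w' z) ν :=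
    (hwm.sub hw'm).aestronglyMeasurable
  have hd2m : AEStronglyMeasurable (fun z => Q z - Q' z) ν :=
    (hQm.sub hQ'm).aestronglyMeasurable
  have int_wQ : Integrable (fun z => w z * Q z) ν := cs_integrable hwsm hQsm hw2 hQ2
  have int_d1Q : Integrable (fun z => (w z - w' z) * Q z) ν :=
    cs_integrable hd1m hQsm hdw2 hQ2
  have int_wd2 : Integrable (fun z => w z * (Q z - Q' z)) ν :=
    cs_integrable hwsm hd2m hw2 hdQ2
  have int_d1d2 : Integrable (fun z => (w z - w' z) * (Q z - Q' z)) ν :=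
    cs_integrable hd1m hd2m hdw2 hdQ2
  have int_w'Q' : Integrable (fun z => w' z * Q' z) ν := by
    refine (((int_wQ.sub int_d1Q).sub int_wd2).add int_d1d2).congr
      (Filter.Eventually.of_forall fun z => ?_)
    simp only [Pi.add_apply, Pi.sub_apply, Pi.neg_apply]
    ring
  have F1 : Integrable (fun z => (w z * Q z) • h z) ν :=
    smul_int int_wQ.aestronglyMeasurable int_wQ hhm hhC
  have F2 : Integrable (fun z => (w' z * Q' z) • h z) ν :=
    smul_int int_w'Q'.aestronglyMeasurable int_w'Q' hhm hhC
  have key : (∫ z, (w z * Q z) • h z ∂ν) - ∫ z, (w' z * Q' z) • h z ∂ν =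
      ∫ z, ((w z - w' z) * Q z + w z * (Q z - Q' z)
        - (w z - w' z) * (Q z - Q' z)) • h z ∂ν := by
    rw [← integral_sub F1 F2]
    refine integral_congr_ae (Filter.Eventually.of_forall fun z => ?_)
    simp only []
    rw [← sub_smul]
    congr 1
    ring
  rw [key]
  have bnd : ‖∫ z, ((w z - w' z) * Q z + w z * (Q z - Q' z)
      - (w z - w' z) * (Q z - Q' z)) • h z ∂ν‖ ≤
      ∫ z, C * (|(w z - w' z) * Q z| + |w z * (Q z - Q' z)|
        + |(w z - w' z) * (Q z - Q' z)|) ∂ν := by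
    refine norm_integral_le_of_norm_le
      (((int_d1Q.abs.add int_wd2.abs).add int_d1d2.abs).const_mul C) ?_
    filter_upwards [hhC] with z hz
    rw [norm_smul, Real.norm_eq_abs]
    have habs : |(w z - w' z) * Q z + w z * (Q z - Q' z)
        - (w z - w' z) * (Q z - Q' z)| ≤
        |(w z - w' z) * Q z| + |w z * (Q z - Q' z)| + |(w z - w' z) * (Q z - Q' z)| := by
      calc |(w z - w' z) * Q z + w z * (Q z - Q' z) - (w z - w' z) * (Q z - Q' z)|
          ≤ |(w z - w' z) * Q z + w z * (Q z - Q' z)| + |(w z - w' z) * (Q z - Q' z)| :=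
            abs_sub _ _
        _ ≤ |(w z - w' z) * Q z| + |w z * (Q z - Q' z)| + |(w z - w' z) * (Q z - Q' z)| :=
            add_le_add_left (abs_add_le _ _) _
    calc _ ≤ (|(w z - w' z) * Q z| + |w z * (Q z - Q' z)|
          + |(w z - w' z) * (Q z - Q' z)|) * C :=
          mul_le_mul habs hz (norm_nonneg _) (by positivity)
      _ = C * (|(w z - w' z) * Q z| + |w z * (Q z - Q' z)|
          + |(w z - w' z) * (Q z - Q' z)|) := mul_comm _ _
  refine bnd.trans ?_
  have ia : Integrable (fun z => |(w z - w' z) * Q z|) ν := int_d1Q.abs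
  have ib : Integrable (fun z => |w z * (Q z - Q' z)|) ν := int_wd2.abs
  have ic : Integrable (fun z => |(w z - w' z) * (Q z - Q' z)|) ν := int_d1d2.abs
  have iab : Integrable
      (fun z => |(w z - w' z) * Q z| + |w z * (Q z - Q' z)|) ν := ia.add ib
  rw [integral_const_mul, integral_add iab ic, integral_add ia ib]
  have b1 : ∫ z, |(w z - w' z) * Q z| ∂ν ≤ εw * Vmax :=
    cs_bound hd1m hQsm hdw2 hQ2 hεw hV hdwb hQ2b
  have b2 : ∫ z, |w z * (Q z - Q' z)| ∂ν ≤ σw * εQ :=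
    cs_bound hwsm hd2m hw2 hdQ2 hσ hεQ hw2b hdQb
  have b3 : ∫ z, |(w z - w' z) * (Q z - Q' z)| ∂ν ≤ εw * εQ :=
    cs_bound hd1m hd2m hdw2 hdQ2 hεw hεQ hdwb hdQb
  refine mul_le_mul_of_nonneg_left ?_ hC
  have heq : εw * Vmax + εQ * (σw + εw) = εw * Vmax + σw * εQ + εw * εQ := by ring
  rw [heq]
  exact add_le_add (add_le_add b1 b2) b3

lemma grad_core (ν : Measure Z) [IsProbabilityMeasure ν]
    {C Vmax σw : ℝ} (hC : 0 ≤ C) (hV : 0 ≤ Vmax) (hσ : 0 ≤ σw)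
    {w Q : Z → ℝ} {h : Z → E}
    (hwm : Measurable w) (hQm : Measurable Q)
    (hhm : AEStronglyMeasurable h ν)
    (hhC : ∀ᵐ z ∂ν, ‖h z‖ ≤ C) (hQb : ∀ᵐ z ∂ν, |Q z| ≤ Vmax)
    (hw2 : Integrable (fun z => w z ^ 2) ν) (hw2b : ∫ z, w z ^ 2 ∂ν ≤ σw ^ 2) :
    ‖∫ z, (w z * Q z) • h z ∂ν‖ ≤ C * (σw * Vmax) := by
  have hQ2 : Integrable (fun z => Q z ^ 2) ν := by
    refine Integrable.mono' (integrable_const (Vmax ^ 2))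
      ((hQm.pow_const 2).aestronglyMeasurable) ?_
    filter_upwards [hQb] with z hz
    rw [Real.norm_eq_abs, abs_pow]
    exact pow_le_pow_left₀ (abs_nonneg _) hz 2
  have hQ2b : ∫ z, Q z ^ 2 ∂ν ≤ Vmax ^ 2 := by
    calc ∫ z, Q z ^ 2 ∂ν ≤ ∫ _z, Vmax ^ 2 ∂ν := by
          refine integral_mono_ae hQ2 (integrable_const _) ?_
          filter_upwards [hQb] with z hz
          calc Q z ^ 2 = |Q z| ^ 2 := (sq_abs _).symm
            _ ≤ Vmax ^ 2 := pow_le_pow_left₀ (abs_nonneg _) hz 2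
      _ = Vmax ^ 2 := by simp
  have int_wQ : Integrable (fun z => w z * Q z) ν :=
    cs_integrable hwm.aestronglyMeasurable hQm.aestronglyMeasurable hw2 hQ2
  have bnd : ‖∫ z, (w z * Q z) • h z ∂ν‖ ≤ ∫ z, C * |w z * Q z| ∂ν := by
    refine norm_integral_le_of_norm_le (int_wQ.abs.const_mul C) ?_
    filter_upwards [hhC] with z hz
    rw [norm_smul, Real.norm_eq_abs]
    calc |w z * Q z| * ‖h z‖ ≤ |w z * Q z| * C :=
          mul_le_mul_of_nonneg_left hz (abs_nonneg _)
      _ = C * |w z * Q z| := mul_comm _ _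
  refine bnd.trans ?_
  rw [integral_const_mul]
  exact mul_le_mul_of_nonneg_left
    (cs_bound hwm.aestronglyMeasurable hQm.aestronglyMeasurable hw2 hQ2 hσ hV hw2b hQ2b) hC


variable {F : Type*} [NormedAddCommGroup F] [InnerProductSpace ℝ F] [CompleteSpace F]

lemma smooth_lower {f : F → ℝ} {L : ℝ} (hL : 0 < L) (hf : Differentiable ℝ f)
    (hlip : ∀ x y, ‖gradient f x - gradient f y‖ ≤ L * ‖x - y‖) (x v : F) :
    f x + inner ℝ (gradient f x) v - L / 2 * ‖v‖ ^ 2 ≤ f (x + v) := by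
  have hgc : Continuous (gradient f) := by
    refine (LipschitzWith.of_dist_le_mul (K := L.toNNReal) fun a b => ?_).continuous
    rw [dist_eq_norm, dist_eq_norm, Real.coe_toNNReal _ hL.le]
    exact hlip a b
  have hline : ∀ t : ℝ, HasDerivAt (fun t : ℝ => x + t • v) v t := fun t => by
    simpa using ((hasDerivAt_id t).smul_const v).const_add x
  have hd : ∀ t : ℝ, HasDerivAt (fun t : ℝ => f (x + t • v))
      (inner ℝ (gradient f (x + t • v)) v) t := fun t => by
    have h1 := (hf (x + t • v)).hasGradientAt.hasFDerivAt
    have := h1.comp_hasDerivAt t (hline t)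
    simpa [InnerProductSpace.toDual_apply_apply, Function.comp_def] using this
  have hcont : Continuous fun t : ℝ => (inner ℝ (gradient f (x + t • v)) v : ℝ) := by
    apply Continuous.inner
    · exact hgc.comp (by continuity)
    · exact continuous_const
  have hFTC : f (x + v) - f x =
      ∫ t in (0:ℝ)..1, (inner ℝ (gradient f (x + t • v)) v : ℝ) := by
    have := intervalIntegral.integral_eq_sub_of_hasDerivAt
      (f := fun t : ℝ => f (x + t • v))
      (fun t _ => hd t) (hcont.intervalIntegrable 0 1)
    simpa using this.symm
  have hmono : ∫ t in (0:ℝ)..1, ((inner ℝ (gradient f x) v : ℝ) - L * t * ‖v‖ ^ 2) ≤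
      ∫ t in (0:ℝ)..1, (inner ℝ (gradient f (x + t • v)) v : ℝ) := by
    refine intervalIntegral.integral_mono_on (by norm_num)
      (Continuous.intervalIntegrable (by continuity :
        Continuous fun t : ℝ => (inner ℝ (gradient f x) v : ℝ) - L * t * ‖v‖ ^ 2) 0 1)
      (hcont.intervalIntegrable 0 1) fun t ht => ?_
    rcases ht with ⟨ht0, _⟩
    have key : (inner ℝ (gradient f x) v : ℝ) - inner ℝ (gradient f (x + t • v)) v ≤
        L * t * ‖v‖ ^ 2 := by
      have h1 : (inner ℝ (gradient f x) v : ℝ) - inner ℝ (gradient f (x + t • v)) v =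
          inner ℝ (gradient f x - gradient f (x + t • v)) v := by
        rw [inner_sub_left]
      rw [h1]
      calc (inner ℝ (gradient f x - gradient f (x + t • v)) v : ℝ)
          ≤ ‖gradient f x - gradient f (x + t • v)‖ * ‖v‖ := real_inner_le_norm _ _
        _ ≤ (L * ‖x - (x + t • v)‖) * ‖v‖ :=
            mul_le_mul_of_nonneg_right (hlip _ _) (norm_nonneg v)
        _ = L * t * ‖v‖ ^ 2 := by
            rw [show x - (x + t • v) = -(t • v) by abel, norm_neg, norm_smul,
              Real.norm_eq_abs, abs_of_nonneg ht0]
            ring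
    linarith
  have hval : ∫ t in (0:ℝ)..1, ((inner ℝ (gradient f x) v : ℝ) - L * t * ‖v‖ ^ 2) =
      (inner ℝ (gradient f x) v : ℝ) - L / 2 * ‖v‖ ^ 2 := by
    rw [intervalIntegral.integral_sub (intervalIntegrable_const)
      (Continuous.intervalIntegrable (by continuity :
        Continuous fun t : ℝ => L * t * ‖v‖ ^ 2) 0 1)]
    simp only [intervalIntegral.integral_const, smul_eq_mul]
    have : ∫ t in (0:ℝ)..1, L * t * ‖v‖ ^ 2 = L / 2 * ‖v‖ ^ 2 := by
      have : (fun t : ℝ => L * t * ‖v‖ ^ 2) = fun t : ℝ => (L * ‖v‖ ^ 2) * t := by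
        funext t; ring
      rw [this, intervalIntegral.integral_const_mul, integral_id]
      ring
    rw [this]
    ring
  linarith [hFTC ▸ (hval ▸ hmono)]

end Auxiliary

set_option maxHeartbeats 1000000 in
/-- Convergence of OPPOSD (Theorem 3 of the paper): gradient ascent with
step size `1/L` on an `L`-smooth expected return `f` with `0 ≤ f ≤ V_max`, driven by plug-in
off-policy gradient estimates
`ζ k = ∫ ŵ_k Q̂_k h_{Θ_k} dν` of the true gradient `∇f(θ) = ∫ w_θ Q_θ h_θ dν`, where the
estimated ratio and critic have root-mean-squared errors at most `ε_w k` and `ε_Q k`,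
satisfies
`(1/K) Σ_{k=1}^K E‖∇f(Θ_k)‖² ≤ 2 L V_max / K + (4C²/K) Σ_{k=1}^K (ε_w k² V_max² + ε_Q k² (σ_w + ε_w k)²)`. -/
theorem opposd_convergence {d : ℕ} {Ω Z : Type} [MeasurableSpace Ω] [MeasurableSpace Z]
    (ℙ : Measure Ω) [IsProbabilityMeasure ℙ] (ν : Measure Z) [IsProbabilityMeasure ν]
    (f : EuclideanSpace ℝ (Fin d) → ℝ) (L Vmax C σw : ℝ)
    (hL : 0 < L) (hC : 0 ≤ C) (hσw : 0 ≤ σw)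
    (hf : Differentiable ℝ f)
    (hlip : ∀ x y, ‖gradient f x - gradient f y‖ ≤ L * ‖x - y‖)
    (hf0 : ∀ x, 0 ≤ f x) (hfV : ∀ x, f x ≤ Vmax)
    (w Q : EuclideanSpace ℝ (Fin d) → Z → ℝ)
    (h : EuclideanSpace ℝ (Fin d) → Z → EuclideanSpace ℝ (Fin d))
    (hwm : ∀ θ, Measurable (w θ)) (hQm : ∀ θ, Measurable (Q θ))
    (hhm : ∀ θ, AEStronglyMeasurable (h θ) ν)
    (hhC : ∀ θ, ∀ᵐ z ∂ν, ‖h θ z‖ ≤ C)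
    (hQb : ∀ θ, ∀ᵐ z ∂ν, |Q θ z| ≤ Vmax)
    (hw2int : ∀ θ, Integrable (fun z => w θ z ^ 2) ν)
    (hw2 : ∀ θ, ∫ z, w θ z ^ 2 ∂ν ≤ σw ^ 2)
    (hgrad : ∀ θ, gradient f θ = ∫ z, (w θ z * Q θ z) • h θ z ∂ν)
    (K : ℕ) (θ1 : EuclideanSpace ℝ (Fin d))
    (Θ : ℕ → Ω → EuclideanSpace ℝ (Fin d)) (hΘ1 : Θ 1 = fun _ => θ1)
    (wh Qh : ℕ → Ω → Z → ℝ)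
    (hΘmeas : ∀ k, Measurable (Θ k))
    (hwhm : ∀ k, Measurable (Function.uncurry (wh k)))
    (hQhm : ∀ k, Measurable (Function.uncurry (Qh k)))
    (hrec : ∀ k, 1 ≤ k → k ≤ K → Θ (k + 1) =
      fun ω => Θ k ω + (1 / L) • ∫ z, (wh k ω z * Qh k ω z) • h (Θ k ω) z ∂ν)
    (εw εQ : ℕ → ℝ) (hεw : ∀ k, 0 ≤ εw k) (hεQ : ∀ k, 0 ≤ εQ k)
    (hwherr : ∀ k, 1 ≤ k → k ≤ K → ∀ᵐ ω ∂ℙ,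
      Integrable (fun z => (w (Θ k ω) z - wh k ω z) ^ 2) ν ∧
        ∫ z, (w (Θ k ω) z - wh k ω z) ^ 2 ∂ν ≤ εw k ^ 2)
    (hQherr : ∀ k, 1 ≤ k → k ≤ K → ∀ᵐ ω ∂ℙ,
      Integrable (fun z => (Q (Θ k ω) z - Qh k ω z) ^ 2) ν ∧
        ∫ z, (Q (Θ k ω) z - Qh k ω z) ^ 2 ∂ν ≤ εQ k ^ 2) :
    (1 / (K : ℝ)) * ∑ k ∈ Finset.Icc 1 K, ∫ ω, ‖gradient f (Θ k ω)‖ ^ 2 ∂ℙ ≤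
      2 * L * Vmax / (K : ℝ) +
        (4 * C ^ 2 / (K : ℝ)) *
          ∑ k ∈ Finset.Icc 1 K, (εw k ^ 2 * Vmax ^ 2 + εQ k ^ 2 * (σw + εw k) ^ 2) := by
  have hV : 0 ≤ Vmax := le_trans (hf0 θ1) (hfV θ1)
  have hgc : Continuous (gradient f) := by
    refine (LipschitzWith.of_dist_le_mul (K := L.toNNReal) fun a b => ?_).continuous
    rw [dist_eq_norm, dist_eq_norm, Real.coe_toNNReal _ hL.le]
    exact hlip a b
  have hgb : ∀ θ, ‖gradient f θ‖ ≤ C * (σw * Vmax) := fun θ => by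
    rw [hgrad θ]
    exact grad_core ν hC hV hσw (hwm θ) (hQm θ) (hhm θ) (hhC θ) (hQb θ)
      (hw2int θ) (hw2 θ)
  have hint : ∀ k, Integrable (fun ω => ‖gradient f (Θ k ω)‖ ^ 2) ℙ := fun k => by
    refine Integrable.mono' (integrable_const ((C * (σw * Vmax)) ^ 2))
      ((((hgc.norm).pow 2).measurable.comp (hΘmeas k)).aestronglyMeasurable)
      (Filter.Eventually.of_forall fun ω => ?_)
    rw [Real.norm_eq_abs, abs_of_nonneg (sq_nonneg _)]
    exact pow_le_pow_left₀ (norm_nonneg _) (hgb _) 2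
  have hgood : ∀ᵐ ω ∂ℙ, ∀ k, 1 ≤ k → k ≤ K →
      ((Integrable (fun z => (w (Θ k ω) z - wh k ω z) ^ 2) ν ∧
          ∫ z, (w (Θ k ω) z - wh k ω z) ^ 2 ∂ν ≤ εw k ^ 2) ∧
        (Integrable (fun z => (Q (Θ k ω) z - Qh k ω z) ^ 2) ν ∧
          ∫ z, (Q (Θ k ω) z - Qh k ω z) ^ 2 ∂ν ≤ εQ k ^ 2)) := by
    rw [MeasureTheory.ae_all_iff]
    intro k
    by_cases hk : 1 ≤ k ∧ k ≤ K
    · filter_upwards [hwherr k hk.1 hk.2, hQherr k hk.1 hk.2] with ω h1 h2 _ _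
      exact ⟨h1, h2⟩
    · filter_upwards with ω h1 h2
      exact absurd ⟨h1, h2⟩ hk
  set T := ∑ k ∈ Finset.Icc 1 K, (εw k ^ 2 * Vmax ^ 2 + εQ k ^ 2 * (σw + εw k) ^ 2)
    with hTdef
  have hT0 : 0 ≤ T := Finset.sum_nonneg fun k _ => by positivity
  have hpath : ∀ᵐ ω ∂ℙ, ∑ k ∈ Finset.Icc 1 K, ‖gradient f (Θ k ω)‖ ^ 2 ≤
      2 * L * Vmax + 2 * C ^ 2 * T := by
    filter_upwards [hgood] with ω hω
    have hstep : ∀ k ∈ Finset.Icc 1 K, ‖gradient f (Θ k ω)‖ ^ 2 ≤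
        2 * L * (f (Θ (k + 1) ω) - f (Θ k ω)) +
          2 * C ^ 2 * (εw k ^ 2 * Vmax ^ 2 + εQ k ^ 2 * (σw + εw k) ^ 2) := by
      intro k hk
      rw [Finset.mem_Icc] at hk
      obtain ⟨⟨hdw2, hdwb⟩, hdQ2, hdQb⟩ := hω k hk.1 hk.2
      set θ := Θ k ω with hθdef
      set ζ := ∫ z, (wh k ω z * Qh k ω z) • h θ z ∂ν with hζdef
      have hnext : Θ (k + 1) ω = θ + (1 / L) • ζ := by
        rw [hrec k hk.1 hk.2]
      have herr : ‖gradient f θ - ζ‖ ≤ C * (εw k * Vmax + εQ k * (σw + εw k)) := by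
        rw [hgrad θ, hζdef]
        exact err_core ν hC hV hσw (hεw k) (hεQ k) (hwm θ) (hQm θ)
          ((hwhm k).of_uncurry_left) ((hQhm k).of_uncurry_left) (hhm θ) (hhC θ)
          (hQb θ) (hw2int θ) (hw2 θ) hdw2 hdwb hdQ2 hdQb
      have hsm := smooth_lower hL hf hlip θ ((1 / L) • ζ)
      rw [← hnext] at hsm
      have hi : (inner ℝ (gradient f θ) ((1 / L) • ζ) : ℝ) =
          (1 / L) * inner ℝ (gradient f θ) ζ := real_inner_smul_right _ _ _
      have hn : ‖(1 / L) • ζ‖ ^ 2 = (1 / L) ^ 2 * ‖ζ‖ ^ 2 := by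
        rw [norm_smul, Real.norm_eq_abs, abs_of_pos (by positivity : (0:ℝ) < 1 / L),
          mul_pow]
      rw [hi, hn] at hsm
      have hns : ‖gradient f θ - ζ‖ ^ 2 =
          ‖gradient f θ‖ ^ 2 - 2 * inner ℝ (gradient f θ) ζ + ‖ζ‖ ^ 2 :=
        norm_sub_sq_real _ _
      have herr2 : ‖gradient f θ - ζ‖ ^ 2 ≤
          (C * (εw k * Vmax + εQ k * (σw + εw k))) ^ 2 :=
        pow_le_pow_left₀ (norm_nonneg _) herr 2
      have hsq : (C * (εw k * Vmax + εQ k * (σw + εw k))) ^ 2 ≤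
          2 * C ^ 2 * (εw k ^ 2 * Vmax ^ 2 + εQ k ^ 2 * (σw + εw k) ^ 2) := by
        nlinarith [sq_nonneg (εw k * Vmax - εQ k * (σw + εw k)), sq_nonneg C]
      have h2L : (0:ℝ) < 2 * L := by positivity
      have hmul := mul_le_mul_of_nonneg_left hsm h2L.le
      have expand : 2 * L * (f θ + 1 / L * (inner ℝ (gradient f θ) ζ : ℝ) -
          L / 2 * ((1 / L) ^ 2 * ‖ζ‖ ^ 2)) =
          2 * L * f θ + 2 * (inner ℝ (gradient f θ) ζ : ℝ) - ‖ζ‖ ^ 2 := by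
        field_simp
      rw [expand] at hmul
      have hsm2 : 2 * (inner ℝ (gradient f θ) ζ : ℝ) - ‖ζ‖ ^ 2 ≤
          2 * L * (f (Θ (k + 1) ω) - f θ) := by linarith [hmul]
      linarith [hns, herr2, hsq, hsm2]
    calc ∑ k ∈ Finset.Icc 1 K, ‖gradient f (Θ k ω)‖ ^ 2
        ≤ ∑ k ∈ Finset.Icc 1 K, (2 * L * (f (Θ (k + 1) ω) - f (Θ k ω)) +
            2 * C ^ 2 * (εw k ^ 2 * Vmax ^ 2 + εQ k ^ 2 * (σw + εw k) ^ 2)) :=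
          Finset.sum_le_sum hstep
      _ = 2 * L * (∑ k ∈ Finset.Icc 1 K, (f (Θ (k + 1) ω) - f (Θ k ω))) +
            2 * C ^ 2 * T := by
          rw [Finset.sum_add_distrib, ← Finset.mul_sum, ← Finset.mul_sum, hTdef]
      _ ≤ 2 * L * Vmax + 2 * C ^ 2 * T := by
          have htel : ∑ k ∈ Finset.Icc 1 K, (f (Θ (k + 1) ω) - f (Θ k ω)) =
              f (Θ (K + 1) ω) - f (Θ 1 ω) := by
            rw [← Finset.Ico_add_one_right_eq_Icc, Finset.sum_Ico_eq_sum_range]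
            have hKK : K + 1 - 1 = K := by omega
            rw [hKK]
            have htel2 := Finset.sum_range_sub (fun i => f (Θ (i + 1) ω)) K
            calc ∑ i ∈ Finset.range K, (f (Θ (1 + i + 1) ω) - f (Θ (1 + i) ω))
                = ∑ i ∈ Finset.range K, (f (Θ (i + 1 + 1) ω) - f (Θ (i + 1) ω)) := by
                  refine Finset.sum_congr rfl fun i _ => ?_
                  rw [Nat.add_comm 1 i]
              _ = f (Θ (K + 1) ω) - f (Θ (0 + 1) ω) := htel2
              _ = f (Θ (K + 1) ω) - f (Θ 1 ω) := by norm_num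
          have hle : f (Θ (K + 1) ω) - f (Θ 1 ω) ≤ Vmax := by
            have h1 := hfV (Θ (K + 1) ω)
            have h2 := hf0 (Θ 1 ω)
            linarith
          have hbound : ∑ k ∈ Finset.Icc 1 K, (f (Θ (k + 1) ω) - f (Θ k ω)) ≤ Vmax := by
            rw [htel]; exact hle
          have := mul_le_mul_of_nonneg_left hbound (by positivity : (0:ℝ) ≤ 2 * L)
          linarith
  have hS : ∑ k ∈ Finset.Icc 1 K, ∫ ω, ‖gradient f (Θ k ω)‖ ^ 2 ∂ℙ ≤
      2 * L * Vmax + 2 * C ^ 2 * T := by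
    rw [← integral_finset_sum _ (fun k _ => hint k)]
    calc ∫ ω, ∑ k ∈ Finset.Icc 1 K, ‖gradient f (Θ k ω)‖ ^ 2 ∂ℙ
        ≤ ∫ _ω, (2 * L * Vmax + 2 * C ^ 2 * T) ∂ℙ :=
          integral_mono_ae (integrable_finset_sum _ fun k _ => hint k)
            (integrable_const _) hpath
      _ = 2 * L * Vmax + 2 * C ^ 2 * T := by simp
  rcases Nat.eq_zero_or_pos K with hK | hK
  · subst hK
    rw [show Finset.Icc 1 0 = (∅ : Finset ℕ) from Finset.Icc_eq_empty (by omega)] at hS ⊢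
    simp
  · have hKpos : (0:ℝ) < (K:ℝ) := Nat.cast_pos.2 hK
    have expand : 2 * L * Vmax / (K:ℝ) + (4 * C ^ 2 / (K:ℝ)) * T =
        (1 / (K:ℝ)) * (2 * L * Vmax + 4 * C ^ 2 * T) := by
      field_simp
    rw [expand]
    refine mul_le_mul_of_nonneg_left ?_ (by positivity)
    have : 2 * C ^ 2 * T ≤ 4 * C ^ 2 * T := by nlinarith [hT0, sq_nonneg C]
    linarith [hS]

end
end
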